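/- Let A be an LM_θ-algebra with dual space (X(A),{f_i^A}_{i∈I}), and let a,b ∈ A with a ≤ b. For an open subset G of X(A) whose complement is semimodal, the following are equivalent: (i) Θ_OS(G) is the principal LM_θ-congruence Θ(a,b) generated by (a,b); (ii) G is the least open subset of X(A) with semimodal complement (ordered by inclusion) containing σ_A(b)\σ_A(a); (iii) G = (σ_A(b)\σ_A(a)) ∪ ⋃_{i∈I} (f_i^A)^{-1}(σ_A(b)\σ_A(a)); (iv) G = (σ_A(b)\σ_A(a)) ∪ ⋃_{i∈I} σ_A(φ_i b ∧ φ̄_i a). -/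

import Mathlib

/-- An LM_θ-algebra over a linearly ordered index set `I`:
a bounded distributive lattice with operations `phi i` and `phibar i`. -/
structure LMAlg (I A : Type*) [LinearOrder I] [DistribLattice A] [BoundedOrder A] where
  phi : I → A → A
  phibar : I → A → A
  phi_sup : ∀ i x y, phi i (x ⊔ y) = phi i x ⊔ phi i y
  phi_inf : ∀ i x y, phi i (x ⊓ y) = phi i x ⊓ phi i y
  phi_bot : ∀ i, phi i ⊥ = ⊥
  phi_top : ∀ i, phi i ⊤ = ⊤
  sup_phibar : ∀ i x, phi i x ⊔ phibar i x = ⊤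
  inf_phibar : ∀ i x, phi i x ⊓ phibar i x = ⊥
  phi_phi : ∀ i j x, phi i (phi j x) = phi j x
  phi_mono : ∀ ⦃i j : I⦄, i ≤ j → ∀ x, phi i x ≤ phi j x
  determined : ∀ x y, (∀ i, phi i x = phi i y) → x = y

/-- A prime filter of a bounded distributive lattice. -/
structure PrimeFilter (A : Type*) [DistribLattice A] [BoundedOrder A] where
  carrier : Set A
  top_mem : ⊤ ∈ carrier
  bot_notMem : ⊥ ∉ carrier
  mem_of_le : ∀ {a b : A}, a ∈ carrier → a ≤ b → b ∈ carrier
  inf_mem : ∀ {a b : A}, a ∈ carrier → b ∈ carrier → a ⊓ b ∈ carrier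
  prime : ∀ {a b : A}, a ⊔ b ∈ carrier → a ∈ carrier ∨ b ∈ carrier

variable {I A : Type*} [LinearOrder I] [DistribLattice A] [BoundedOrder A]

/-- Prime filters ordered by inclusion. -/
instance : PartialOrder (PrimeFilter A) where
  le P Q := P.carrier ⊆ Q.carrier
  le_refl _ _ hx := hx
  le_trans _ _ _ h1 h2 _ hx := h2 (h1 hx)
  le_antisymm P Q h1 h2 := by
    cases P; cases Q
    simp only [PrimeFilter.mk.injEq]
    exact subset_antisymm h1 h2

/-- The map `σ_A`. -/
def sigmaA (a : A) : Set (PrimeFilter A) := {P | a ∈ P.carrier}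

/-- The Priestley topology on the set of prime filters, with sub-basis the sets
`σ_A a` and their complements. -/
instance : TopologicalSpace (PrimeFilter A) :=
  TopologicalSpace.generateFrom
    (Set.range (sigmaA (A := A)) ∪ Set.range (fun a : A => (sigmaA a)ᶜ))

/-- The map `f_i^A (P) = φ_i⁻¹(P)` on prime filters. -/
def LMAlg.fA (L : LMAlg I A) (i : I) (P : PrimeFilter A) : PrimeFilter A where
  carrier := L.phi i ⁻¹' P.carrier
  top_mem := by simp only [Set.mem_preimage, L.phi_top]; exact P.top_mem
  bot_notMem := by simp only [Set.mem_preimage, L.phi_bot]; exact P.bot_notMem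
  mem_of_le := by
    intro a b ha hab
    have h1 : L.phi i b = L.phi i a ⊔ L.phi i b := by
      rw [← L.phi_sup, sup_eq_right.mpr hab]
    exact P.mem_of_le ha (le_sup_left.trans_eq h1.symm)
  inf_mem := by
    intro a b ha hb
    simp only [Set.mem_preimage, L.phi_inf]
    exact P.inf_mem ha hb
  prime := by
    intro a b h
    simp only [Set.mem_preimage, L.phi_sup] at h
    exact P.prime h

/-- An LM_θ-congruence: a bounded-lattice congruence compatible with all `phi i`, `phibar i`. -/
structure IsLMCongr (L : LMAlg I A) (r : A → A → Prop) : Prop where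
  refl : ∀ x, r x x
  symm : ∀ {x y}, r x y → r y x
  trans : ∀ {x y z}, r x y → r y z → r x z
  sup_congr : ∀ {x y u v}, r x y → r u v → r (x ⊔ u) (y ⊔ v)
  inf_congr : ∀ {x y u v}, r x y → r u v → r (x ⊓ u) (y ⊓ v)
  phi_congr : ∀ (i : I) {x y}, r x y → r (L.phi i x) (L.phi i y)
  phibar_congr : ∀ (i : I) {x y}, r x y → r (L.phibar i x) (L.phibar i y)

/-- A θ-congruence: a lattice congruence `r` with `r x y ↔ ∀ i, r (φ_i x) (φ_i y)`. -/
structure IsThetaCongr (L : LMAlg I A) (r : A → A → Prop) : Prop where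
  refl : ∀ x, r x x
  symm : ∀ {x y}, r x y → r y x
  trans : ∀ {x y z}, r x y → r y z → r x z
  sup_congr : ∀ {x y u v}, r x y → r u v → r (x ⊔ u) (y ⊔ v)
  inf_congr : ∀ {x y u v}, r x y → r u v → r (x ⊓ u) (y ⊓ v)
  theta : ∀ x y, r x y ↔ ∀ i : I, r (L.phi i x) (L.phi i y)

/-- `Y` is semimodal if `f i '' Y ⊆ Y` for all `i`. -/
def Semimodal {I X : Type*} (f : I → X → X) (Y : Set X) : Prop := ∀ i, f i '' Y ⊆ Y

/-- `Y` is modal if `f i ⁻¹' Y = Y` for all `i`. -/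
def Modal {I X : Type*} (f : I → X → X) (Y : Set X) : Prop := ∀ i, f i ⁻¹' Y = Y

/-- `Y` is a θ-subset if `⋃ i, f i '' Y ⊆ Y ⊆ closure (⋃ i, f i '' Y)`. -/
def ThetaSubset {I X : Type*} [TopologicalSpace X] (f : I → X → X) (Y : Set X) : Prop :=
  (⋃ i, f i '' Y) ⊆ Y ∧ Y ⊆ closure (⋃ i, f i '' Y)

/-- The relation `Θ` determined by an (open) subset `G` of the dual space:
`(a,b) ∈ Θ(G)` iff `σ_A a △ σ_A b ⊆ G`. -/
def thetaO (G : Set (PrimeFilter A)) : A → A → Prop :=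
  fun a b => symmDiff (sigmaA a) (sigmaA b) ⊆ G

/-- `r` is the principal LM_θ-congruence generated by `(a,b)`. -/
def IsPrincipalLMCongrOn (L : LMAlg I A) (r : A → A → Prop) (a b : A) : Prop :=
  IsLMCongr L r ∧ r a b ∧ ∀ s, IsLMCongr L s → s a b → ∀ x y, r x y → s x y

/-- `r` is the principal θ-congruence generated by `(a,b)`. -/
def IsPrincipalThetaCongrOn (L : LMAlg I A) (r : A → A → Prop) (a b : A) : Prop :=
  IsThetaCongr L r ∧ r a b ∧ ∀ s, IsThetaCongr L s → s a b → ∀ x y, r x y → s x y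

/-- `r` is a principal LM_θ-congruence. -/
def IsPrincipalLMCongr (L : LMAlg I A) (r : A → A → Prop) : Prop :=
  ∃ a b, IsPrincipalLMCongrOn L r a b

/-- `r` is a principal θ-congruence. -/
def IsPrincipalThetaCongr (L : LMAlg I A) (r : A → A → Prop) : Prop :=
  ∃ a b, IsPrincipalThetaCongrOn L r a b

/-- `r` is a Boolean LM_θ-congruence: a complemented element of the lattice of
LM_θ-congruences ordered by inclusion (the bottom element is equality and the
join of `r` and its complement, i.e. the least congruence containing both, is
the total relation). -/
def IsBooleanLMCongr (L : LMAlg I A) (r : A → A → Prop) : Prop :=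
  IsLMCongr L r ∧ ∃ s, IsLMCongr L s ∧
    (∀ x y, (r x y ∧ s x y) ↔ x = y) ∧
    (∀ t, IsLMCongr L t → (∀ x y, r x y → t x y) → (∀ x y, s x y → t x y) → ∀ x y, t x y)


namespace LMAux

open Set

variable {I A : Type*} [LinearOrder I] [DistribLattice A] [BoundedOrder A]

@[simp] lemma mem_sigma {a : A} {P : PrimeFilter A} : P ∈ sigmaA a ↔ a ∈ P.carrier := Iff.rfl

@[simp] lemma mem_fA (L : LMAlg I A) (i : I) (P : PrimeFilter A) (x : A) :
    x ∈ (L.fA i P).carrier ↔ L.phi i x ∈ P.carrier := Iff.rfl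

lemma sigma_sup (x y : A) : sigmaA (x ⊔ y) = sigmaA x ∪ sigmaA y := by
  ext P
  constructor
  · exact fun h => P.prime h
  · rintro (h | h)
    · exact P.mem_of_le h le_sup_left
    · exact P.mem_of_le h le_sup_right

lemma sigma_inf (x y : A) : sigmaA (x ⊓ y) = sigmaA x ∩ sigmaA y := by
  ext P
  exact ⟨fun h => ⟨P.mem_of_le h inf_le_left, P.mem_of_le h inf_le_right⟩,
    fun h => P.inf_mem h.1 h.2⟩

lemma sigma_top : sigmaA (⊤ : A) = Set.univ := Set.eq_univ_of_forall fun P => P.top_mem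

lemma sigma_bot : sigmaA (⊥ : A) = ∅ := Set.eq_empty_of_forall_notMem fun P => P.bot_notMem

lemma isOpen_sigma (x : A) : IsOpen (sigmaA x) :=
  TopologicalSpace.GenerateOpen.basic _ (Or.inl ⟨x, rfl⟩)

lemma isOpen_sigma_compl (y : A) : IsOpen (sigmaA y)ᶜ :=
  TopologicalSpace.GenerateOpen.basic _ (Or.inr ⟨y, rfl⟩)

lemma sigma_phi (L : LMAlg I A) (i : I) (x : A) :
    sigmaA (L.phi i x) = L.fA i ⁻¹' sigmaA x := rfl

lemma phibar_mem (L : LMAlg I A) (i : I) (x : A) (P : PrimeFilter A) :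
    L.phibar i x ∈ P.carrier ↔ L.phi i x ∉ P.carrier := by
  constructor
  · intro h h'
    exact P.bot_notMem (L.inf_phibar i x ▸ P.inf_mem h' h)
  · intro h
    have ht := P.top_mem
    rw [← L.sup_phibar i x] at ht
    exact (P.prime ht).resolve_left h

/-- Every open set of the generated topology is, around each of its points, a basic set
`σ x ∩ (σ y)ᶜ`. -/
lemma open_exists_basic {G : Set (PrimeFilter A)} (hG : IsOpen G) {P : PrimeFilter A}
    (hP : P ∈ G) :
    ∃ x y : A, P ∈ sigmaA x ∩ (sigmaA y)ᶜ ∧ sigmaA x ∩ (sigmaA y)ᶜ ⊆ G := by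
  have h : TopologicalSpace.GenerateOpen
      (Set.range (sigmaA (A := A)) ∪ Set.range (fun a : A => (sigmaA a)ᶜ)) G := hG
  clear hG
  revert hP
  induction h with
  | basic s hs =>
      rw [Set.mem_union] at hs
      rcases hs with ⟨x, rfl⟩ | ⟨y, rfl⟩
      · exact fun hP => ⟨x, ⊥, ⟨hP, by simp [sigma_bot]⟩, by simp [sigma_bot]⟩
      · exact fun hP => ⟨⊤, y, ⟨by simp [sigma_top], hP⟩, by simp [sigma_top]⟩
  | univ => exact fun _ => ⟨⊤, ⊥, ⟨by simp [sigma_top], by simp [sigma_bot]⟩, by simp⟩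
  | inter s t hs ht ihs iht =>
      intro hP
      obtain ⟨x1, y1, hm1, hs1⟩ := ihs hP.1
      obtain ⟨x2, y2, hm2, hs2⟩ := iht hP.2
      have hEq : sigmaA (x1 ⊓ x2) ∩ (sigmaA (y1 ⊔ y2))ᶜ =
          (sigmaA x1 ∩ (sigmaA y1)ᶜ) ∩ (sigmaA x2 ∩ (sigmaA y2)ᶜ) := by
        rw [sigma_inf, sigma_sup, Set.compl_union]
        ext Q
        simp only [Set.mem_inter_iff, Set.mem_compl_iff]
        tauto
      refine ⟨x1 ⊓ x2, y1 ⊔ y2, ?_, ?_⟩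
      · rw [hEq]; exact ⟨hm1, hm2⟩
      · rw [hEq]; exact fun Q hQ => ⟨hs1 hQ.1, hs2 hQ.2⟩
  | sUnion S hS ih =>
      intro hP
      obtain ⟨t, htS, hPt⟩ := hP
      obtain ⟨x, y, hm, hsub⟩ := ih t htS hPt
      exact ⟨x, y, hm, hsub.trans (Set.subset_sUnion_of_mem htS)⟩

/-- `thetaO G` is an LM congruence as soon as `Gᶜ` is semimodal. -/
lemma thetaO_isLMCongr (L : LMAlg I A) {G : Set (PrimeFilter A)}
    (hG' : Semimodal L.fA Gᶜ) : IsLMCongr L (thetaO G) := by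
  have hphi : ∀ (i : I) {x y : A}, thetaO G x y → thetaO G (L.phi i x) (L.phi i y) := by
    intro i x y h P hP
    have key : L.fA i P ∈ symmDiff (sigmaA x) (sigmaA y) := by
      rw [Set.mem_symmDiff] at hP ⊢
      exact hP
    by_contra hPG
    exact hG' i ⟨P, hPG, rfl⟩ (h key)
  refine ⟨?_, ?_, ?_, ?_, ?_, hphi, ?_⟩
  · intro x P hP
    rw [Set.mem_symmDiff] at hP
    tauto
  · intro x y h P hP
    exact h (by rwa [symmDiff_comm] at hP)
  · intro x y z h1 h2 P hP
    have h1' := @h1 P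
    have h2' := @h2 P
    rw [Set.mem_symmDiff] at hP h1' h2'
    by_cases hy : P ∈ sigmaA y <;> tauto
  · intro x y u v h1 h2 P hP
    have h1' := @h1 P
    have h2' := @h2 P
    simp only [sigma_sup, Set.mem_symmDiff, Set.mem_union] at hP h1' h2'
    tauto
  · intro x y u v h1 h2 P hP
    have h1' := @h1 P
    have h2' := @h2 P
    simp only [sigma_inf, Set.mem_symmDiff, Set.mem_inter_iff] at hP h1' h2'
    tauto
  · intro i x y h P hP
    have key : P ∈ symmDiff (sigmaA (L.phi i x)) (sigmaA (L.phi i y)) := by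
      rw [Set.mem_symmDiff] at hP ⊢
      simp only [mem_sigma, phibar_mem L] at hP
      tauto
    exact hphi i h key

/-- Prime filter separation in a bounded distributive lattice. -/
lemma exists_primeFilter {B : Type*} [DistribLattice B] [BoundedOrder B] {c d : B}
    (h : ¬ c ≤ d) : ∃ P : PrimeFilter B, c ∈ P.carrier ∧ d ∉ P.carrier := by
  have hdisj : Disjoint ((Order.PFilter.principal c : Order.PFilter B) : Set B)
      ((Order.Ideal.principal d : Order.Ideal B) : Set B) := by
    rw [Set.disjoint_left]
    intro z hz hz'
    exact h (le_trans (Order.PFilter.mem_principal.mp hz) (Order.Ideal.mem_principal.mp hz'))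
  obtain ⟨J, hJ, hIJ, hFJ⟩ := DistribLattice.prime_ideal_of_disjoint_filter_ideal hdisj
  refine ⟨⟨(↑J : Set B)ᶜ, ?_, ?_, ?_, ?_, ?_⟩, ?_, ?_⟩
  · exact Set.disjoint_left.mp hFJ (Order.PFilter.mem_principal.mpr le_top)
  · simp only [Set.mem_compl_iff, not_not]
    exact J.bot_mem
  · intro u v hu huv hv
    exact hu (J.lower huv hv)
  · intro u v hu hv huv
    exact ((hJ.mem_or_mem huv).elim hu hv)
  · intro u v huv
    by_contra hc
    push_neg at hc
    simp only [Set.mem_compl_iff, not_not] at hc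
    exact huv (J.sup_mem hc.1 hc.2)
  · exact Set.disjoint_left.mp hFJ (Order.PFilter.mem_principal.mpr le_rfl)
  · simp only [Set.mem_compl_iff, not_not]
    exact hIJ (Order.Ideal.mem_principal.mpr le_rfl)

/-- A bundled lattice congruence. -/
structure LatCong (B : Type*) [DistribLattice B] [BoundedOrder B] where
  std : Setoid B
  sup_congr : ∀ {p q u v : B}, std.r p q → std.r u v → std.r (p ⊔ u) (q ⊔ v)
  inf_congr : ∀ {p q u v : B}, std.r p q → std.r u v → std.r (p ⊓ u) (q ⊓ v)

namespace LatCong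

variable {B : Type*} [DistribLattice B] [BoundedOrder B] (c : LatCong B)

def Q := Quotient c.std

instance : Max c.Q :=
  ⟨Quotient.map₂ (· ⊔ ·) (fun _ _ h _ _ h' => c.sup_congr h h')⟩

instance : Min c.Q :=
  ⟨Quotient.map₂ (· ⊓ ·) (fun _ _ h _ _ h' => c.inf_congr h h')⟩

instance : Top c.Q := ⟨Quotient.mk c.std ⊤⟩
instance : Bot c.Q := ⟨Quotient.mk c.std ⊥⟩

instance instLat : Lattice c.Q :=
  Lattice.mk'
    (fun q r => Quotient.inductionOn₂ q r fun p s => congrArg (Quotient.mk c.std) (sup_comm p s))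
    (fun q r t => Quotient.inductionOn₃ q r t fun p s u =>
      congrArg (Quotient.mk c.std) (sup_assoc p s u))
    (fun q r => Quotient.inductionOn₂ q r fun p s => congrArg (Quotient.mk c.std) (inf_comm p s))
    (fun q r t => Quotient.inductionOn₃ q r t fun p s u =>
      congrArg (Quotient.mk c.std) (inf_assoc p s u))
    (fun q r => Quotient.inductionOn₂ q r fun p s =>
      congrArg (Quotient.mk c.std) (sup_inf_self (a := p) (b := s)))
    (fun q r => Quotient.inductionOn₂ q r fun p s =>
      congrArg (Quotient.mk c.std) (inf_sup_self (a := p) (b := s)))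

instance : DistribLattice c.Q :=
  { instLat c with
    le_sup_inf := fun q r t => Quotient.inductionOn₃ q r t fun p s u =>
      sup_eq_right.mp (congrArg (Quotient.mk c.std)
        (sup_eq_right.mpr (le_sup_inf (x := p) (y := s) (z := u)))) }

instance : BoundedOrder c.Q where
  le_top q := Quotient.inductionOn q fun p =>
    sup_eq_right.mp (congrArg (Quotient.mk c.std) (sup_top_eq p))
  bot_le q := Quotient.inductionOn q fun p =>
    sup_eq_right.mp (congrArg (Quotient.mk c.std) (bot_sup_eq p))

lemma mk_mono {p s : B} (h : p ≤ s) :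
    @LE.le c.Q _ (Quotient.mk c.std p) (Quotient.mk c.std s) :=
  sup_eq_right.mp (congrArg (Quotient.mk c.std) (sup_eq_right.mpr h))

/-- Pull back a prime filter of the quotient to a (saturated) prime filter. -/
def pull (P' : PrimeFilter c.Q) : PrimeFilter B where
  carrier := {p | Quotient.mk c.std p ∈ P'.carrier}
  top_mem := P'.top_mem
  bot_notMem := P'.bot_notMem
  mem_of_le := fun hp hpq => P'.mem_of_le hp (c.mk_mono hpq)
  inf_mem := fun hp hq => P'.inf_mem hp hq
  prime := fun h => P'.prime h

lemma exists_saturated {x y : B} (h : ¬ c.std.r x y) :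
    ∃ P : PrimeFilter B,
      ((x ∈ P.carrier ∧ y ∉ P.carrier) ∨ (y ∈ P.carrier ∧ x ∉ P.carrier)) ∧
      ∀ u v : B, c.std.r u v → (u ∈ P.carrier ↔ v ∈ P.carrier) := by
  rcases Classical.em (@LE.le c.Q _ (Quotient.mk c.std x) (Quotient.mk c.std y)) with hle | hle
  · have hle' : ¬ @LE.le c.Q _ (Quotient.mk c.std y) (Quotient.mk c.std x) := by
      intro h'
      exact h (Quotient.exact (le_antisymm (α := c.Q) hle h'))
    obtain ⟨P', h1, h2⟩ := exists_primeFilter hle'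
    exact ⟨c.pull P', Or.inr ⟨h1, h2⟩,
      fun u v huv => iff_of_eq (congrArg (· ∈ P'.carrier) (Quotient.sound huv))⟩
  · obtain ⟨P', h1, h2⟩ := exists_primeFilter hle
    exact ⟨c.pull P', Or.inl ⟨h1, h2⟩,
      fun u v huv => iff_of_eq (congrArg (· ∈ P'.carrier) (Quotient.sound huv))⟩

end LatCong

end LMAux


open LMAux in
/-- characterizations of the open set with semimodal complement determining
the principal LM_θ-congruence `Θ(a,b)`, for `a ≤ b`. -/
theorem stmt2 {I A : Type*} [LinearOrder I] [DistribLattice A] [BoundedOrder A]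
    (L : LMAlg I A) (a b : A) (hab : a ≤ b)
    (G : Set (PrimeFilter A)) (hG : IsOpen G) (hG' : Semimodal L.fA Gᶜ) :
    List.TFAE
      [ IsPrincipalLMCongrOn L (thetaO G) a b,
        IsLeast {H : Set (PrimeFilter A) |
          (IsOpen H ∧ Semimodal L.fA Hᶜ) ∧ sigmaA b \ sigmaA a ⊆ H} G,
        G = (sigmaA b \ sigmaA a) ∪ ⋃ i, L.fA i ⁻¹' (sigmaA b \ sigmaA a),
        G = (sigmaA b \ sigmaA a) ∪ ⋃ i, sigmaA (L.phi i b ⊓ L.phibar i a) ] := by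
  classical
  -- notation
  have hpre : ∀ i : I, L.fA i ⁻¹' (sigmaA b \ sigmaA a)
      = sigmaA (L.phi i b) \ sigmaA (L.phi i a) := by
    intro i
    rw [sigma_phi, sigma_phi, Set.preimage_diff]
  have hG0open : IsOpen ((sigmaA b \ sigmaA a) ∪ ⋃ i, L.fA i ⁻¹' (sigmaA b \ sigmaA a)) := by
    have hdo : ∀ u v : A, IsOpen (sigmaA u \ sigmaA v) := by
      intro u v
      rw [Set.diff_eq]
      exact (isOpen_sigma u).inter (isOpen_sigma_compl v)
    refine (hdo b a).union (isOpen_iUnion fun i => ?_)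
    rw [hpre i]
    exact hdo _ _
  have hG0semi : Semimodal L.fA
      ((sigmaA b \ sigmaA a) ∪ ⋃ i, L.fA i ⁻¹' (sigmaA b \ sigmaA a))ᶜ := by
    rintro i _ ⟨P, hP, rfl⟩
    intro hcon
    refine hP ?_
    rcases hcon with hmem | hmem
    · exact Set.mem_union_right _ (Set.mem_iUnion.mpr ⟨i, hmem⟩)
    · obtain ⟨j, hj⟩ := Set.mem_iUnion.mp hmem
      refine Set.mem_union_right _ (Set.mem_iUnion.mpr ⟨j, ?_⟩)
      have hj' : L.phi i (L.phi j b) ∈ P.carrier ∧ L.phi i (L.phi j a) ∉ P.carrier := hj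
      rw [L.phi_phi, L.phi_phi] at hj'
      exact hj'
  have hG0least : IsLeast {H : Set (PrimeFilter A) |
      (IsOpen H ∧ Semimodal L.fA Hᶜ) ∧ sigmaA b \ sigmaA a ⊆ H}
      ((sigmaA b \ sigmaA a) ∪ ⋃ i, L.fA i ⁻¹' (sigmaA b \ sigmaA a)) := by
    constructor
    · exact ⟨⟨hG0open, hG0semi⟩, Set.subset_union_left⟩
    · rintro H ⟨⟨hHo, hHs⟩, hHD⟩
      refine Set.union_subset hHD (Set.iUnion_subset fun i P hP => ?_)
      by_contra hPH
      exact hHs i ⟨P, hPH, rfl⟩ (hHD (Set.mem_preimage.mp hP))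
  have hP0 : IsPrincipalLMCongrOn L
      (thetaO ((sigmaA b \ sigmaA a) ∪ ⋃ i, L.fA i ⁻¹' (sigmaA b \ sigmaA a))) a b := by
    refine ⟨thetaO_isLMCongr L hG0semi, ?_, ?_⟩
    · intro P hP
      rw [Set.mem_symmDiff] at hP
      rcases hP with ⟨ha', hb'⟩ | ⟨hb', ha'⟩
      · exact absurd (P.mem_of_le ha' hab) hb'
      · exact Set.mem_union_left _ ⟨hb', ha'⟩
    · intro s hs hsab x y hxy
      by_contra hnxy
      obtain ⟨P, hPmem, hPsat⟩ :=
        LMAux.LatCong.exists_saturated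
          ⟨⟨s, ⟨hs.refl, fun h => hs.symm h, fun h h' => hs.trans h h'⟩⟩,
            fun h h' => hs.sup_congr h h', fun h h' => hs.inf_congr h h'⟩ hnxy
      have hPG := hxy (Set.mem_symmDiff.mpr hPmem)
      rcases hPG with hPD | hPU
      · exact hPD.2 ((hPsat a b hsab).mpr hPD.1)
      · obtain ⟨i, hi⟩ := Set.mem_iUnion.mp hPU
        have hi' : L.phi i b ∈ P.carrier ∧ L.phi i a ∉ P.carrier := hi
        exact hi'.2 ((hPsat _ _ (hs.phi_congr i hsab)).mpr hi'.1)
  have hsigphi : (⋃ i, L.fA i ⁻¹' (sigmaA b \ sigmaA a))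
      = ⋃ i, sigmaA (L.phi i b ⊓ L.phibar i a) := by
    refine Set.iUnion_congr fun i => ?_
    ext P
    simp only [Set.mem_preimage, Set.mem_diff, mem_sigma, mem_fA, sigma_inf,
      Set.mem_inter_iff, phibar_mem L]
  have hsd : ∀ u v : A, symmDiff (sigmaA (u ⊓ v)) (sigmaA u) = sigmaA u ∩ (sigmaA v)ᶜ := by
    intro u v
    ext Q
    rw [Set.mem_symmDiff]
    simp only [sigma_inf, Set.mem_inter_iff, Set.mem_compl_iff]
    tauto
  tfae_have 3 → 1 := by
    intro h3
    rw [h3]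
    exact hP0
  tfae_have 1 → 3 := by
    intro h1
    have hrel : ∀ x y : A, thetaO G x y ↔
        thetaO ((sigmaA b \ sigmaA a) ∪ ⋃ i, L.fA i ⁻¹' (sigmaA b \ sigmaA a)) x y :=
      fun x y => ⟨fun h => h1.2.2 _ hP0.1 hP0.2.1 x y h,
        fun h => hP0.2.2 _ h1.1 h1.2.1 x y h⟩
    apply Set.Subset.antisymm
    · intro P hP
      obtain ⟨u, v, ⟨hPu, hPv⟩, hsub⟩ := open_exists_basic hG hP
      have h5 : thetaO G (u ⊓ v) u := by
        show symmDiff (sigmaA (u ⊓ v)) (sigmaA u) ⊆ G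
        rw [hsd u v]
        exact hsub
      have h6 : P ∈ symmDiff (sigmaA (u ⊓ v)) (sigmaA u) := by
        rw [hsd u v]
        exact ⟨hPu, hPv⟩
      exact (hrel _ _).mp h5 h6
    · intro P hP
      obtain ⟨u, v, ⟨hPu, hPv⟩, hsub⟩ := open_exists_basic hG0open hP
      have h5 : thetaO ((sigmaA b \ sigmaA a) ∪ ⋃ i, L.fA i ⁻¹' (sigmaA b \ sigmaA a))
          (u ⊓ v) u := by
        show symmDiff (sigmaA (u ⊓ v)) (sigmaA u) ⊆ _
        rw [hsd u v]
        exact hsub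
      have h6 : P ∈ symmDiff (sigmaA (u ⊓ v)) (sigmaA u) := by
        rw [hsd u v]
        exact ⟨hPu, hPv⟩
      exact (hrel _ _).mpr h5 h6
  tfae_have 3 → 2 := by
    intro h3
    rw [h3]
    exact hG0least
  tfae_have 2 → 3 := fun h2 => h2.unique hG0least
  tfae_have 3 ↔ 4 := by rw [hsigphi]
  tfae_finish
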